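/- For every λ > 0, the maximal solution α of α'' = W'(α) with α(0) = λ, α'(0) = 0 is even, is defined exactly on the open interval (−l(λ), l(λ)) where l(λ) = ∫₀^∞ ds/√(2(W(s+λ) − W(λ))), and α : [0, l(λ)) → [λ, ∞) is strictly increasing and onto (in particular α(x) → ∞ as x → l(λ)⁻). -/

import Mathlib

open MeasureTheory Set Filter

noncomputable def msHfn (W : ℝ → ℝ) (lam u : ℝ) : ℝ := 1 / Real.sqrt (2 * (W u - W lam))

noncomputable def msFfn (W : ℝ → ℝ) (lam a : ℝ) : ℝ := ∫ u in lam..a, msHfn W lam u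

noncomputable def msLvl (W : ℝ → ℝ) (lam : ℝ) : ℝ := ∫ u in Ioi lam, msHfn W lam u

open Classical in
noncomputable def msAfn (W : ℝ → ℝ) (lam y : ℝ) : ℝ :=
  if h : ∃ a, lam ≤ a ∧ msFfn W lam a = y then h.choose else lam

noncomputable def msAlf (W : ℝ → ℝ) (lam x : ℝ) : ℝ := msAfn W lam |x|

noncomputable def msAlf' (W : ℝ → ℝ) (lam x : ℝ) : ℝ :=
  Real.sign x * Real.sqrt (2 * (W (msAlf W lam x) - W lam))

set_option maxHeartbeats 2000000 in
theorem maximal_solution_alpha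
    (W : ℝ → ℝ) (hW : ContDiff ℝ 2 W) (hWnn : ∀ t, 0 ≤ W t)
    (hWconv : ConvexOn ℝ Set.univ W) (hWvan : ∀ t, W t = 0 ↔ t = 0)
    (hWint : IntegrableOn (fun u => 1 / Real.sqrt (W u)) {u : ℝ | 1 < u})
    (lam : ℝ) (hlam : 0 < lam) :
    ∃ (l : ℝ) (α α' : ℝ → ℝ),
      l = (∫ s in Ioi (0:ℝ), 1 / Real.sqrt (2 * (W (s + lam) - W lam))) ∧ 0 < l ∧
      (∀ x ∈ Ioo (-l) l, HasDerivAt α (α' x) x ∧ HasDerivAt α' (deriv W (α x)) x) ∧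
      α 0 = lam ∧ α' 0 = 0 ∧
      (∀ x ∈ Ioo (-l) l, α (-x) = α x) ∧
      StrictMonoOn α (Ico 0 l) ∧
      α '' (Ico 0 l) = Ici lam ∧
      Tendsto α (nhdsWithin l (Iio l)) atTop := by
  classical
  have hW0 : W 0 = 0 := (hWvan 0).mpr rfl
  have hWlam : 0 < W lam := by
    rcases lt_or_eq_of_le (hWnn lam) with h | h
    · exact h
    · exact absurd ((hWvan lam).mp h.symm) hlam.ne'
  have hWdiff : Differentiable ℝ W := hW.differentiable (by norm_num)
  have hWd : ∀ x : ℝ, HasDerivAt W (deriv W x) x := fun x => (hWdiff x).hasDerivAt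
  have hWdc : Continuous (deriv W) := hW.continuous_deriv one_le_two
  -- slope inequality from convexity
  have hslope : ∀ ⦃a b : ℝ⦄, 0 < a → a < b → W a / a * (b - a) ≤ W b - W a := by
    intro a b ha hab
    have h1 := hWconv.slope_mono_adjacent (mem_univ (0:ℝ)) (mem_univ b) ha hab
    rw [hW0] at h1
    have h2 : W a / a ≤ (W b - W a) / (b - a) := by
      have : (W a - 0) / (a - 0) = W a / a := by ring_nf
      rw [this] at h1; exact h1
    exact (le_div_iff₀ (by linarith)).mp h2
  have hm0 : 0 < W lam / lam := div_pos hWlam hlam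
  have hgap : ∀ ⦃u : ℝ⦄, lam < u → W lam / lam * (u - lam) ≤ W u - W lam :=
    fun u hu => hslope hlam hu
  have hGpos : ∀ ⦃u : ℝ⦄, lam < u → 0 < 2 * (W u - W lam) := by
    intro u hu; nlinarith [hgap hu]
  have hWpos : ∀ ⦃a : ℝ⦄, 0 < a → 0 < W a := by
    intro a ha
    rcases lt_or_eq_of_le (hWnn a) with h | h
    · exact h
    · exact absurd ((hWvan a).mp h.symm) ha.ne'
  have hWmono : ∀ ⦃a b : ℝ⦄, lam ≤ a → a ≤ b → W a ≤ W b := by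
    intro a b ha hab
    rcases eq_or_lt_of_le hab with rfl | h
    · exact le_rfl
    · have h1 := hslope (hlam.trans_le ha) h
      have h2 := hWpos (hlam.trans_le ha)
      nlinarith [div_pos h2 (hlam.trans_le ha)]
  -- basic facts about the integrand
  have hhnn : ∀ u, 0 ≤ msHfn W lam u := fun u => div_nonneg zero_le_one (Real.sqrt_nonneg _)
  have hGmeas : Measurable fun u => Real.sqrt (2 * (W u - W lam)) :=
    (Real.continuous_sqrt.comp (continuous_const.mul (hW.continuous.sub continuous_const))).measurable
  have hhmeas : Measurable (msHfn W lam) := by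
    have heq : msHfn W lam = fun u => (Real.sqrt (2 * (W u - W lam)))⁻¹ := by
      funext u; rw [msHfn, one_div]
    rw [heq]; exact hGmeas.inv
  have hhpos : ∀ ⦃u : ℝ⦄, lam < u → 0 < msHfn W lam u := by
    intro u hu
    exact div_pos one_pos (Real.sqrt_pos.mpr (hGpos hu))
  have hhcont : ∀ ⦃u : ℝ⦄, lam < u → ContinuousAt (msHfn W lam) u := by
    intro u hu
    have h1 : ContinuousAt (fun v => Real.sqrt (2 * (W v - W lam))) u :=
      Real.continuous_sqrt.continuousAt.comp
        ((continuous_const.mul ((hW.continuous).sub continuous_const)).continuousAt)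
    exact continuousAt_const.div h1 (ne_of_gt (Real.sqrt_pos.mpr (hGpos hu)))
  -- pointwise upper bound near lam
  have hub : ∀ ⦃u : ℝ⦄, lam ≤ u →
      msHfn W lam u ≤ (Real.sqrt (2 * (W lam / lam)))⁻¹ * (u - lam) ^ (-(1/2) : ℝ) := by
    intro u hu
    rcases eq_or_lt_of_le hu with rfl | hu'
    · simp [msHfn, Real.zero_rpow (by norm_num : (-(1/2):ℝ) ≠ 0)]
    · have h1 : 2 * (W lam / lam) * (u - lam) ≤ 2 * (W u - W lam) := by nlinarith [hgap hu']
      have h2 : 0 < 2 * (W lam / lam) * (u - lam) := by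
        have : 0 < u - lam := by linarith
        positivity
      have h3 : Real.sqrt (2 * (W lam / lam) * (u - lam)) ≤ Real.sqrt (2 * (W u - W lam)) :=
        Real.sqrt_le_sqrt h1
      have h4 : Real.sqrt (2 * (W lam / lam) * (u - lam))
          = Real.sqrt (2 * (W lam / lam)) * Real.sqrt (u - lam) := Real.sqrt_mul (by positivity) _
      have h5 : (u - lam) ^ (-(1/2) : ℝ) = (Real.sqrt (u - lam))⁻¹ := by
        rw [Real.rpow_neg (by linarith), ← Real.sqrt_eq_rpow]
      have h6 : 0 < Real.sqrt (2 * (W lam / lam) * (u - lam)) := Real.sqrt_pos.mpr h2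
      rw [msHfn, one_div, h5]
      calc (Real.sqrt (2 * (W u - W lam)))⁻¹ ≤ (Real.sqrt (2 * (W lam / lam) * (u - lam)))⁻¹ :=
            inv_anti₀ h6 h3
        _ = (Real.sqrt (2 * (W lam / lam)))⁻¹ * (Real.sqrt (u - lam))⁻¹ := by
            rw [h4, mul_inv]
  -- integrability
  have hIoc : ∀ b : ℝ, IntegrableOn (msHfn W lam) (Ioc lam b) := by
    intro b
    rcases le_or_gt b lam with hb | hb
    · rw [Ioc_eq_empty (not_lt.mpr hb)]
      exact integrableOn_empty
    · have hrint : IntervalIntegrable (fun u => (u - lam) ^ (-(1/2):ℝ)) volume lam b := by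
        have h0 := (intervalIntegral.intervalIntegrable_rpow' (a := 0) (b := b - lam)
          (by norm_num : (-1:ℝ) < -(1/2)))
        have h1 := h0.comp_sub_right lam
        simpa using h1
      have hrint2 : IntegrableOn
          (fun u => (Real.sqrt (2 * (W lam / lam)))⁻¹ * (u - lam) ^ (-(1/2):ℝ)) (Ioc lam b) :=
        ((intervalIntegrable_iff_integrableOn_Ioc_of_le hb.le).mp hrint).const_mul _
      apply Integrable.mono hrint2 hhmeas.aestronglyMeasurable.restrict
      filter_upwards [ae_restrict_mem measurableSet_Ioc] with u hu
      rw [Real.norm_eq_abs, Real.norm_eq_abs, abs_of_nonneg (hhnn u)]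
      exact (hub hu.1.le).trans (le_abs_self _)
  have hc1 : W lam < W (lam + 1) := by nlinarith [hgap (by linarith : lam < lam + 1)]
  have hIoiTail : IntegrableOn (msHfn W lam) (Ioi (lam + 1)) := by
    set c := 1 - W lam / W (lam + 1) with hc
    have hW1 : 0 < W (lam + 1) := hWpos (by linarith)
    have hcpos : 0 < c := by
      rw [hc]; have : W lam / W (lam + 1) < 1 := (div_lt_one hW1).mpr hc1; linarith
    have hbase : IntegrableOn (fun u => 1 / Real.sqrt (W u)) (Ioi (lam + 1)) :=
      hWint.mono_set (fun u hu => by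
        simp only [mem_setOf_eq]
        have h9 : lam + 1 < u := hu
        linarith)
    apply Integrable.mono (hbase.const_mul ((Real.sqrt (2 * c))⁻¹))
      hhmeas.aestronglyMeasurable.restrict
    filter_upwards [ae_restrict_mem measurableSet_Ioi] with u hu
    have hu1 : lam + 1 ≤ u := le_of_lt hu
    have hWu : 0 < W u := hWpos (by linarith)
    have h1 : W lam ≤ W lam / W (lam + 1) * W u := by
      rw [div_mul_eq_mul_div, le_div_iff₀ hW1]
      have h9 := hWmono (by linarith : lam ≤ lam + 1) hu1
      nlinarith [hWlam.le]
    have h2 : 2 * c * W u ≤ 2 * (W u - W lam) := by rw [hc]; nlinarith [h1]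
    have h3 : 0 < 2 * c * W u := by positivity
    have h4 : Real.sqrt (2 * c * W u) ≤ Real.sqrt (2 * (W u - W lam)) := Real.sqrt_le_sqrt h2
    rw [Real.norm_eq_abs, Real.norm_eq_abs, abs_of_nonneg (hhnn u)]
    have h5 : msHfn W lam u ≤ (Real.sqrt (2*c))⁻¹ * (1 / Real.sqrt (W u)) := by
      rw [msHfn, one_div]
      calc (Real.sqrt (2 * (W u - W lam)))⁻¹ ≤ (Real.sqrt (2 * c * W u))⁻¹ :=
          inv_anti₀ (Real.sqrt_pos.mpr h3) h4
        _ = (Real.sqrt (2*c))⁻¹ * (1 / Real.sqrt (W u)) := by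
          rw [Real.sqrt_mul (by positivity), mul_inv, one_div]
    exact h5.trans (le_abs_self _)
  have hIoi : IntegrableOn (msHfn W lam) (Ioi lam) := by
    have h := (hIoc (lam+1)).union hIoiTail
    rwa [Ioc_union_Ioi_eq_Ioi (by linarith : lam ≤ lam + 1)] at h
  have hII : ∀ ⦃a b : ℝ⦄, lam ≤ a → lam ≤ b → IntervalIntegrable (msHfn W lam) volume a b := by
    intro a b ha hb
    rw [intervalIntegrable_iff]
    refine hIoi.mono_set (fun u hu => ?_)
    have h9 : min a b < u := hu.1
    exact lt_of_le_of_lt (le_min ha hb) h9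
  -- facts about F
  have hFlam : msFfn W lam lam = 0 := intervalIntegral.integral_same
  have hFIoc : ∀ ⦃a : ℝ⦄, lam ≤ a → msFfn W lam a = ∫ u in Ioc lam a, msHfn W lam u :=
    fun a ha => intervalIntegral.integral_of_le ha
  have hFd : ∀ ⦃a : ℝ⦄, lam < a → HasDerivAt (msFfn W lam) (msHfn W lam a) a := by
    intro a ha
    exact intervalIntegral.integral_hasDerivAt_right (hII le_rfl ha.le)
      ⟨univ, univ_mem, hhmeas.aestronglyMeasurable.restrict⟩ (hhcont ha)
  have hFadd : ∀ ⦃a b : ℝ⦄, lam ≤ a → lam ≤ b →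
      msFfn W lam b = msFfn W lam a + ∫ u in a..b, msHfn W lam u := by
    intro a b ha hb
    rw [msFfn, msFfn, intervalIntegral.integral_add_adjacent_intervals (hII le_rfl ha) (hII ha hb)]
  have hFmono : StrictMonoOn (msFfn W lam) (Ici lam) := by
    intro a ha b hb hab
    have h2 : 0 < ∫ u in a..b, msHfn W lam u :=
      intervalIntegral.intervalIntegral_pos_of_pos_on (hII ha hb)
        (fun x hx => hhpos (lt_of_le_of_lt ha hx.1)) hab
    have h3 := hFadd ha hb
    linarith
  have hFnonneg : ∀ ⦃a : ℝ⦄, lam ≤ a → 0 ≤ msFfn W lam a := by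
    intro a ha
    rcases eq_or_lt_of_le ha with rfl | h
    · rw [hFlam]
    · rw [← hFlam]; exact (hFmono (mem_Ici.mpr le_rfl) ha h).le
  have htailpos : ∀ ⦃a : ℝ⦄, lam ≤ a → 0 < ∫ u in Ioi a, msHfn W lam u := by
    intro a ha
    have h1 : 0 < ∫ u in a..(a+1), msHfn W lam u :=
      intervalIntegral.intervalIntegral_pos_of_pos_on (hII ha (by linarith))
        (fun x hx => hhpos (lt_of_le_of_lt ha hx.1)) (by linarith)
    have h2 : (∫ u in Ioc a (a+1), msHfn W lam u) ≤ ∫ u in Ioi a, msHfn W lam u := by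
      apply setIntegral_mono_set (hIoi.mono_set (Ioi_subset_Ioi ha))
        (Eventually.of_forall hhnn |>.filter_mono (ae_mono (Measure.restrict_le_self.trans le_rfl)) |> fun h => h)
      · exact HasSubset.Subset.eventuallyLE Ioc_subset_Ioi_self
    rw [intervalIntegral.integral_of_le (by linarith : a ≤ a + 1)] at h1
    linarith
  have hsplit : ∀ ⦃a : ℝ⦄, lam ≤ a →
      msLvl W lam = msFfn W lam a + ∫ u in Ioi a, msHfn W lam u := by
    intro a ha
    rw [hFIoc ha, msLvl, ← setIntegral_union (Ioc_disjoint_Ioi le_rfl) measurableSet_Ioi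
      (hIoc a) (hIoi.mono_set (Ioi_subset_Ioi ha)), Ioc_union_Ioi_eq_Ioi ha]
  have hFlt : ∀ ⦃a : ℝ⦄, lam ≤ a → msFfn W lam a < msLvl W lam := by
    intro a ha
    have h1 := hsplit ha
    have h2 := htailpos ha
    linarith
  have hlvlpos : 0 < msLvl W lam := by
    have := hFlt (le_refl lam)
    rwa [hFlam] at this
  have hFcont : ∀ ⦃b : ℝ⦄, lam ≤ b → ContinuousOn (msFfn W lam) (Icc lam b) := by
    intro b hb
    have h1 : IntegrableOn (msHfn W lam) (Icc lam b) :=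
      (integrableOn_Icc_iff_integrableOn_Ioc enorm_ne_top).mpr (hIoc b)
    exact (intervalIntegral.continuousOn_primitive h1).congr (fun x hx => hFIoc hx.1)
  -- F tends to lvl at infinity
  have hFtendsto : Tendsto (msFfn W lam) atTop (nhds (msLvl W lam)) := by
    have hUnion : (⋃ b : ℝ, Ioc lam b) = Ioi lam := by
      ext x
      simp only [mem_iUnion, mem_Ioc, mem_Ioi]
      exact ⟨fun ⟨b, hb⟩ => hb.1, fun hx => ⟨x, hx, le_rfl⟩⟩
    have h1 : Tendsto (fun b : ℝ => ∫ u in Ioc lam b, msHfn W lam u) atTop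
        (nhds (msLvl W lam)) := by
      have h2 := tendsto_setIntegral_of_monotone (s := fun b : ℝ => Ioc lam b)
        (f := msHfn W lam) (μ := volume) (fun b => measurableSet_Ioc)
        (fun b c hbc => Ioc_subset_Ioc le_rfl hbc) (by rw [hUnion]; exact hIoi)
      rw [hUnion] at h2
      exact h2
    apply h1.congr'
    filter_upwards [eventually_ge_atTop lam] with b hb
    exact (hFIoc hb).symm
  -- inverse function A
  have hAex : ∀ ⦃y : ℝ⦄, 0 ≤ y → y < msLvl W lam → ∃ a, lam ≤ a ∧ msFfn W lam a = y := by
    intro y hy0 hyl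
    obtain ⟨b, hby, hb⟩ :=
      ((hFtendsto.eventually (eventually_gt_nhds hyl)).and (eventually_ge_atTop lam)).exists
    have h1 : y ∈ Icc (msFfn W lam lam) (msFfn W lam b) := by
      rw [hFlam]; exact ⟨hy0, hby.le⟩
    obtain ⟨a, ha, hFa⟩ := intermediate_value_Icc hb (hFcont hb) h1
    exact ⟨a, ha.1, hFa⟩
  have hA : ∀ ⦃y : ℝ⦄, 0 ≤ y → y < msLvl W lam →
      lam ≤ msAfn W lam y ∧ msFfn W lam (msAfn W lam y) = y := by
    intro y hy0 hyl
    have hex := hAex hy0 hyl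
    rw [msAfn, dif_pos hex]
    exact hex.choose_spec
  have hFinj : InjOn (msFfn W lam) (Ici lam) := hFmono.injOn
  have hAF : ∀ ⦃a : ℝ⦄, lam ≤ a → msAfn W lam (msFfn W lam a) = a := by
    intro a ha
    have h1 := hA (hFnonneg ha) (hFlt ha)
    exact hFinj h1.1 ha h1.2
  have hA0 : msAfn W lam 0 = lam := by
    have h1 := hA le_rfl hlvlpos
    have := hFinj h1.1 (le_refl lam) (by rw [h1.2, hFlam])
    exact this
  have hAlt : ∀ ⦃y z : ℝ⦄, 0 ≤ y → y < z → z < msLvl W lam →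
      msAfn W lam y < msAfn W lam z := by
    intro y z hy0 hyz hzl
    have hy := hA hy0 (hyz.trans hzl)
    have hz := hA (hy0.trans hyz.le) hzl
    rcases lt_trichotomy (msAfn W lam y) (msAfn W lam z) with h | h | h
    · exact h
    · exfalso; rw [← hy.2, ← hz.2, h] at hyz; exact lt_irrefl _ hyz
    · exfalso
      have := hFmono hz.1 hy.1 h
      rw [hy.2, hz.2] at this
      exact absurd hyz (not_lt.mpr this.le)
  have hAgt : ∀ ⦃y : ℝ⦄, 0 < y → y < msLvl W lam → lam < msAfn W lam y := by
    intro y hy0 hyl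
    have := hAlt le_rfl hy0 hyl
    rwa [hA0] at this
  have hAle : ∀ ⦃y z : ℝ⦄, 0 ≤ y → y < msLvl W lam → 0 ≤ z → z < msLvl W lam →
      msFfn W lam (msAfn W lam y) < msFfn W lam (msAfn W lam z) → msAfn W lam y < msAfn W lam z := by
    intro y z hy0 hyl hz0 hzl h
    rw [(hA hy0 hyl).2, (hA hz0 hzl).2] at h
    exact hAlt hy0 h hzl
  -- continuity of A
  have hAcontAt : ∀ ⦃y : ℝ⦄, 0 < y → y < msLvl W lam → ContinuousAt (msAfn W lam) y := by
    intro y hy0 hyl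
    rw [Metric.continuousAt_iff]
    intro ε hε
    set a0 := msAfn W lam y with ha0def
    have hy := hA hy0.le hyl
    have ha0 : lam < a0 := hAgt hy0 hyl
    set ε' := min (ε/2) ((a0 - lam)/2) with hε'def
    have hε' : 0 < ε' := lt_min (by linarith) (by linarith)
    have hε'lt : ε' < ε := lt_of_le_of_lt (min_le_left _ _) (by linarith)
    have hsub : lam ≤ a0 - ε' := by
      have : ε' ≤ (a0 - lam)/2 := min_le_right _ _
      linarith
    have hy1 : msFfn W lam (a0 - ε') < y := by
      have := hFmono hsub (by linarith : lam ≤ a0) (by linarith)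
      rwa [hy.2] at this
    have hy2 : y < msFfn W lam (a0 + ε') := by
      have := hFmono (by linarith : lam ≤ a0) (by linarith : lam ≤ a0 + ε') (by linarith)
      rwa [hy.2] at this
    refine ⟨min (y - msFfn W lam (a0 - ε')) (msFfn W lam (a0 + ε') - y),
      lt_min (by linarith) (by linarith), fun x hx => ?_⟩
    rw [Real.dist_eq] at hx
    have hx1 : msFfn W lam (a0 - ε') < x := by
      have := abs_lt.mp hx
      have h9 := min_le_left (y - msFfn W lam (a0 - ε')) (msFfn W lam (a0 + ε') - y)
      linarith [this.1]
    have hx2 : x < msFfn W lam (a0 + ε') := by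
      have := abs_lt.mp hx
      have h9 := min_le_right (y - msFfn W lam (a0 - ε')) (msFfn W lam (a0 + ε') - y)
      linarith [this.2]
    have hx0 : 0 ≤ x := le_trans (hFnonneg hsub) hx1.le
    have hxl : x < msLvl W lam := hx2.trans (hFlt (by linarith))
    have hax := hA hx0 hxl
    have hlow : a0 - ε' < msAfn W lam x := by
      by_contra hcon
      push_neg at hcon
      rcases eq_or_lt_of_le hcon with heq | hlt
      · rw [← hax.2, heq] at hx1; exact lt_irrefl _ hx1
      · have := hFmono hax.1 hsub hlt
        rw [hax.2] at this
        linarith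
    have hhigh : msAfn W lam x < a0 + ε' := by
      by_contra hcon
      push_neg at hcon
      rcases eq_or_lt_of_le hcon with heq | hlt
      · rw [← hax.2, ← heq] at hx2; exact lt_irrefl _ hx2
      · have := hFmono (by linarith : lam ≤ a0 + ε') hax.1 hlt
        rw [hax.2] at this
        linarith
    rw [Real.dist_eq, abs_lt]
    constructor <;> linarith
  have hAcont0 : Tendsto (msAfn W lam) (nhdsWithin 0 (Ici 0)) (nhds lam) := by
    rw [Metric.tendsto_nhdsWithin_nhds]
    intro ε hε
    set ε' := ε/2 with hε'def
    have hδ : 0 < msFfn W lam (lam + ε') := by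
      rw [← hFlam]
      exact hFmono (mem_Ici.mpr le_rfl) (by simp only [mem_Ici]; linarith) (by linarith)
    refine ⟨msFfn W lam (lam + ε'), hδ, fun x hx hxd => ?_⟩
    have hx0 : 0 ≤ x := hx
    rw [Real.dist_eq, sub_zero, abs_of_nonneg hx0] at hxd
    have hxl : x < msLvl W lam := hxd.trans (hFlt (by linarith))
    have hax := hA hx0 hxl
    have hhigh : msAfn W lam x < lam + ε' := by
      by_contra hcon
      push_neg at hcon
      rcases eq_or_lt_of_le hcon with heq | hlt
      · rw [← hax.2, ← heq] at hxd; exact lt_irrefl _ hxd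
      · have := hFmono (by linarith : lam ≤ lam + ε') hax.1 hlt
        rw [hax.2] at this
        linarith
    rw [Real.dist_eq, abs_lt]
    constructor <;> linarith [hax.1]
  -- derivative of A on (0, lvl)
  have hAd : ∀ ⦃x : ℝ⦄, 0 < x → x < msLvl W lam →
      HasDerivAt (msAfn W lam) (Real.sqrt (2 * (W (msAfn W lam x) - W lam))) x := by
    intro x hx0 hxl
    have hax := hA hx0.le hxl
    have hagt : lam < msAfn W lam x := hAgt hx0 hxl
    have hd : HasDerivAt (msFfn W lam) (msHfn W lam (msAfn W lam x)) (msAfn W lam x) := hFd hagt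
    have hne : msHfn W lam (msAfn W lam x) ≠ 0 := (hhpos hagt).ne'
    have hloc : ∀ᶠ y in nhds x, msFfn W lam (msAfn W lam y) = y := by
      filter_upwards [isOpen_Ioo.eventually_mem (⟨hx0, hxl⟩ : x ∈ Ioo 0 (msLvl W lam))] with y hy
      exact (hA hy.1.le hy.2).2
    have h1 := HasDerivAt.of_local_left_inverse (hAcontAt hx0 hxl) hd hne hloc
    have h2 : (msHfn W lam (msAfn W lam x))⁻¹ = Real.sqrt (2 * (W (msAfn W lam x) - W lam)) := by
      rw [msHfn, one_div, inv_inv]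
    rwa [h2] at h1
  -- alpha basics
  have half0 : msAlf W lam 0 = lam := by rw [msAlf, abs_zero, hA0]
  have half'0 : msAlf' W lam 0 = 0 := by rw [msAlf', Real.sign_zero, zero_mul]
  have heven : ∀ x : ℝ, msAlf W lam (-x) = msAlf W lam x := fun x => by rw [msAlf, msAlf, abs_neg]
  have halfgelam : ∀ ⦃x : ℝ⦄, -msLvl W lam < x → x < msLvl W lam → lam ≤ msAlf W lam x := by
    intro x h1 h2
    have : |x| < msLvl W lam := abs_lt.mpr ⟨h1, h2⟩
    exact (hA (abs_nonneg x) this).1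
  -- derivative of alpha away from 0
  have halfd : ∀ ⦃x : ℝ⦄, x ∈ Ioo (-(msLvl W lam)) (msLvl W lam) → x ≠ 0 →
      HasDerivAt (msAlf W lam) (msAlf' W lam x) x := by
    intro x hx hne
    rcases hne.lt_or_gt with hneg | hpos
    · have hax : 0 < -x := by linarith
      have haxl : -x < msLvl W lam := by have := hx.1; linarith
      have h1 : HasDerivAt (fun y => msAfn W lam (-y))
          (Real.sqrt (2 * (W (msAfn W lam (-x)) - W lam)) * (-1)) x :=
        (hAd hax haxl).comp x (hasDerivAt_neg x)
      have h2 : msAlf W lam =ᶠ[nhds x] fun y => msAfn W lam (-y) := by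
        filter_upwards [isOpen_Iio.eventually_mem (hneg : x ∈ Iio 0)] with y hy
        rw [msAlf, abs_of_neg hy]
      have h3 := h1.congr_of_eventuallyEq h2
      have h4 : msAlf' W lam x = Real.sqrt (2 * (W (msAfn W lam (-x)) - W lam)) * (-1) := by
        rw [msAlf', Real.sign_of_neg hneg, msAlf, abs_of_neg hneg]; ring
      rwa [h4]
    · have hxl : x < msLvl W lam := hx.2
      have h2 : msAlf W lam =ᶠ[nhds x] msAfn W lam := by
        filter_upwards [isOpen_Ioi.eventually_mem (hpos : x ∈ Ioi 0)] with y hy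
        rw [msAlf, abs_of_pos hy]
      have h3 := (hAd hpos hxl).congr_of_eventuallyEq h2
      have h4 : msAlf' W lam x = Real.sqrt (2 * (W (msAfn W lam x) - W lam)) := by
        rw [msAlf', Real.sign_of_pos hpos, msAlf, abs_of_pos hpos, one_mul]
      rwa [h4]
  -- second derivative away from 0
  have half'd : ∀ ⦃x : ℝ⦄, x ∈ Ioo (-(msLvl W lam)) (msLvl W lam) → x ≠ 0 →
      HasDerivAt (msAlf' W lam) (deriv W (msAlf W lam x)) x := by
    intro x hx hne
    have haxabs : 0 < |x| := abs_pos.mpr hne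
    have haxl : |x| < msLvl W lam := abs_lt.mpr ⟨hx.1, hx.2⟩
    have hgtlam : lam < msAlf W lam x := by
      rw [msAlf]; exact hAgt haxabs haxl
    have hGx : 0 < 2 * (W (msAlf W lam x) - W lam) := hGpos hgtlam
    have hsq : 0 < Real.sqrt (2 * (W (msAlf W lam x) - W lam)) := Real.sqrt_pos.mpr hGx
    have h1 : HasDerivAt (fun y => 2 * (W (msAlf W lam y) - W lam))
        (2 * (deriv W (msAlf W lam x) * msAlf' W lam x)) x :=
      ((((hWd (msAlf W lam x)).comp x (halfd hx hne)).sub_const (W lam)).const_mul 2)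
    have h2 : HasDerivAt (fun y => Real.sqrt (2 * (W (msAlf W lam y) - W lam)))
        (1 / (2 * Real.sqrt (2 * (W (msAlf W lam x) - W lam)))
          * (2 * (deriv W (msAlf W lam x) * msAlf' W lam x))) x :=
      (Real.hasDerivAt_sqrt hGx.ne').comp x h1
    rcases hne.lt_or_gt with hneg | hpos
    · have h3 : msAlf' W lam =ᶠ[nhds x]
          fun y => -Real.sqrt (2 * (W (msAlf W lam y) - W lam)) := by
        filter_upwards [isOpen_Iio.eventually_mem (hneg : x ∈ Iio 0)] with y hy
        rw [msAlf', Real.sign_of_neg hy]; ring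
      have h4 := h2.neg.congr_of_eventuallyEq h3
      have h5 : msAlf' W lam x = -Real.sqrt (2 * (W (msAlf W lam x) - W lam)) := by
        rw [msAlf', Real.sign_of_neg hneg]; ring
      have h6 : -(1 / (2 * Real.sqrt (2 * (W (msAlf W lam x) - W lam)))
          * (2 * (deriv W (msAlf W lam x) * msAlf' W lam x))) = deriv W (msAlf W lam x) := by
        have hs2 : Real.sqrt (W (msAlf W lam x) - W lam) ≠ 0 := by
          have h9 : 0 < W (msAlf W lam x) - W lam := by linarith [hGx]
          positivity
        rw [h5]; field_simp
      rwa [h6] at h4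
    · have h3 : msAlf' W lam =ᶠ[nhds x]
          fun y => Real.sqrt (2 * (W (msAlf W lam y) - W lam)) := by
        filter_upwards [isOpen_Ioi.eventually_mem (hpos : x ∈ Ioi 0)] with y hy
        rw [msAlf', Real.sign_of_pos hy, one_mul]
      have h4 := h2.congr_of_eventuallyEq h3
      have h5 : msAlf' W lam x = Real.sqrt (2 * (W (msAlf W lam x) - W lam)) := by
        rw [msAlf', Real.sign_of_pos hpos, one_mul]
      have h6 : 1 / (2 * Real.sqrt (2 * (W (msAlf W lam x) - W lam)))
          * (2 * (deriv W (msAlf W lam x) * msAlf' W lam x)) = deriv W (msAlf W lam x) := by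
        have hs2 : Real.sqrt (W (msAlf W lam x) - W lam) ≠ 0 := by
          have h9 : 0 < W (msAlf W lam x) - W lam := by linarith [hGx]
          positivity
        rw [h5]; field_simp
      rwa [h6] at h4
  -- tangent line bounds
  have hk : 0 < deriv W lam := by
    have h1 := hWconv.slope_le_deriv (mem_univ 0) (mem_univ lam) hlam (hWdiff lam)
    rw [slope_def_field, hW0, sub_zero, sub_zero] at h1
    exact lt_of_lt_of_le hm0 h1
  have htan_low : ∀ ⦃u : ℝ⦄, lam ≤ u → deriv W lam * (u - lam) ≤ W u - W lam := by
    intro u hu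
    rcases eq_or_lt_of_le hu with rfl | hlt
    · simp
    · have h1 := hWconv.deriv_le_slope (mem_univ lam) (mem_univ u) hlt (hWdiff lam)
      rw [slope_def_field] at h1
      exact (le_div_iff₀ (by linarith)).mp h1
  have htan_upp : ∀ ⦃δ u : ℝ⦄, 0 < δ → lam ≤ u → u ≤ lam + δ →
      W u - W lam ≤ deriv W (lam + δ) * (u - lam) := by
    intro δ u hδ hu hud
    rcases eq_or_lt_of_le hu with rfl | hlt
    · simp
    · rcases eq_or_lt_of_le hud with rfl | hlt2
      · have h1 := hWconv.slope_le_deriv (mem_univ lam) (mem_univ (lam + δ)) hlt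
          (hWdiff (lam + δ))
        rw [slope_def_field] at h1
        exact (div_le_iff₀ (by linarith)).mp h1
      · have h1 := hWconv.slope_mono_adjacent (mem_univ lam) (mem_univ (lam + δ)) hlt hlt2
        have h2 := hWconv.slope_le_deriv (mem_univ u) (mem_univ (lam + δ)) hlt2
          (hWdiff (lam + δ))
        rw [slope_def_field] at h2
        exact (div_le_iff₀ (by linarith)).mp (h1.trans h2)
  have hMpos : ∀ ⦃δ : ℝ⦄, 0 < δ → 0 < deriv W (lam + δ) := by
    intro δ hδ
    have h1 := htan_upp hδ (by linarith : lam ≤ lam + δ) le_rfl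
    have h2 := hgap (by linarith : lam < lam + δ)
    nlinarith
  -- generalized comparison bounds for the integrand
  have hubgen : ∀ ⦃c : ℝ⦄, 0 < c → ∀ ⦃u : ℝ⦄, lam ≤ u →
      2 * c * (u - lam) ≤ 2 * (W u - W lam) →
      msHfn W lam u ≤ (Real.sqrt (2 * c))⁻¹ * (u - lam) ^ (-(1/2) : ℝ) := by
    intro c hc u hu hcomp
    rcases eq_or_lt_of_le hu with rfl | hu'
    · simp [msHfn, Real.zero_rpow (by norm_num : (-(1/2):ℝ) ≠ 0)]
    · have h2 : 0 < 2 * c * (u - lam) := by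
        have : 0 < u - lam := by linarith
        positivity
      have h3 := Real.sqrt_le_sqrt hcomp
      have h4 : Real.sqrt (2 * c * (u - lam))
          = Real.sqrt (2 * c) * Real.sqrt (u - lam) := Real.sqrt_mul (by positivity) _
      have h5 : (u - lam) ^ (-(1/2) : ℝ) = (Real.sqrt (u - lam))⁻¹ := by
        rw [Real.rpow_neg (by linarith), ← Real.sqrt_eq_rpow]
      rw [msHfn, one_div, h5]
      calc (Real.sqrt (2 * (W u - W lam)))⁻¹ ≤ (Real.sqrt (2 * c * (u - lam)))⁻¹ :=
            inv_anti₀ (Real.sqrt_pos.mpr h2) h3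
        _ = (Real.sqrt (2 * c))⁻¹ * (Real.sqrt (u - lam))⁻¹ := by rw [h4, mul_inv]
  have hlbgen : ∀ ⦃c : ℝ⦄, 0 < c → ∀ ⦃u : ℝ⦄, lam ≤ u →
      2 * (W u - W lam) ≤ 2 * c * (u - lam) →
      (Real.sqrt (2 * c))⁻¹ * (u - lam) ^ (-(1/2) : ℝ) ≤ msHfn W lam u := by
    intro c hc u hu hcomp
    rcases eq_or_lt_of_le hu with rfl | hu'
    · simp [msHfn, Real.zero_rpow (by norm_num : (-(1/2):ℝ) ≠ 0)]
    · have h2 : 0 < 2 * (W u - W lam) := hGpos hu'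
      have h3 := Real.sqrt_le_sqrt hcomp
      have h4 : Real.sqrt (2 * c * (u - lam))
          = Real.sqrt (2 * c) * Real.sqrt (u - lam) := Real.sqrt_mul (by positivity) _
      have h5 : (u - lam) ^ (-(1/2) : ℝ) = (Real.sqrt (u - lam))⁻¹ := by
        rw [Real.rpow_neg (by linarith), ← Real.sqrt_eq_rpow]
      rw [h5, ← mul_inv, ← h4, msHfn, one_div]
      exact inv_anti₀ (Real.sqrt_pos.mpr h2) h3
  -- explicit primitive of the rpow comparison function
  have hrintI : ∀ a : ℝ, IntervalIntegrable (fun u => (u - lam) ^ (-(1/2):ℝ)) volume lam a := by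
    intro a
    have h0 := (intervalIntegral.intervalIntegrable_rpow' (a := 0) (b := a - lam)
      (by norm_num : (-1:ℝ) < -(1/2)))
    have h1 := h0.comp_sub_right lam
    simpa using h1
  have hrpowint : ∀ ⦃a : ℝ⦄, lam ≤ a →
      (∫ u in lam..a, (u - lam) ^ (-(1/2):ℝ)) = 2 * Real.sqrt (a - lam) := by
    intro a ha
    rw [intervalIntegral.integral_comp_sub_right (fun u => u ^ (-(1/2):ℝ)) lam, sub_self]
    rw [integral_rpow (Or.inl (by norm_num : (-1:ℝ) < -(1/2)))]
    have h1 : (-(1/2) : ℝ) + 1 = 1/2 := by norm_num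
    rw [h1, Real.zero_rpow (by norm_num : (1/2:ℝ) ≠ 0), ← Real.sqrt_eq_rpow]
    ring
  -- the key quadratic bounds near x = 0
  have hkey : ∀ ⦃δ x : ℝ⦄, 0 < δ → 0 < x → x ≤ msFfn W lam (lam + δ) →
      deriv W lam * x^2 / 2 ≤ msAfn W lam x - lam ∧
      msAfn W lam x - lam ≤ deriv W (lam + δ) * x^2 / 2 ∧
      msAfn W lam x ≤ lam + δ := by
    intro δ x hδ hx0 hxF
    have hxl : x < msLvl W lam := lt_of_le_of_lt hxF (hFlt (by linarith))
    have hax := hA hx0.le hxl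
    set a := msAfn W lam x with hadef
    have hagt : lam < a := hAgt hx0 hxl
    have haled : a ≤ lam + δ := by
      by_contra hcon
      push_neg at hcon
      have := hFmono (by simp only [mem_Ici]; linarith) hax.1 hcon
      rw [hax.2] at this
      linarith
    set M := deriv W (lam + δ) with hMdef
    have hMp : 0 < M := hMpos hδ
    have hupint : IntervalIntegrable
        (fun u => (Real.sqrt (2 * deriv W lam))⁻¹ * (u - lam) ^ (-(1/2):ℝ)) volume lam a :=
      (hrintI a).const_mul _
    have hloint : IntervalIntegrable
        (fun u => (Real.sqrt (2 * M))⁻¹ * (u - lam) ^ (-(1/2):ℝ)) volume lam a :=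
      (hrintI a).const_mul _
    have hup : x ≤ (Real.sqrt (2 * deriv W lam))⁻¹ * (2 * Real.sqrt (a - lam)) := by
      have h1 : (∫ u in lam..a, msHfn W lam u)
          ≤ ∫ u in lam..a, (Real.sqrt (2 * deriv W lam))⁻¹ * (u - lam) ^ (-(1/2):ℝ) := by
        apply intervalIntegral.integral_mono_on hagt.le (hII le_rfl hagt.le) hupint
        intro u hu
        exact hubgen hk hu.1 (by nlinarith [htan_low hu.1])
      rw [intervalIntegral.integral_const_mul, hrpowint hagt.le] at h1
      rw [← hax.2]
      exact h1
    have hlo : (Real.sqrt (2 * M))⁻¹ * (2 * Real.sqrt (a - lam)) ≤ x := by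
      have h1 : (∫ u in lam..a, (Real.sqrt (2 * M))⁻¹ * (u - lam) ^ (-(1/2):ℝ))
          ≤ ∫ u in lam..a, msHfn W lam u := by
        apply intervalIntegral.integral_mono_on hagt.le hloint (hII le_rfl hagt.le)
        intro u hu
        exact hlbgen hMp hu.1 (by nlinarith [htan_upp hδ hu.1 (le_trans hu.2 haled)])
      rw [intervalIntegral.integral_const_mul, hrpowint hagt.le] at h1
      rw [← hax.2]
      exact h1
    have hsa : Real.sqrt (a - lam) ^ 2 = a - lam := Real.sq_sqrt (by linarith)
    have hsk : Real.sqrt (2 * deriv W lam) ^ 2 = 2 * deriv W lam :=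
      Real.sq_sqrt (by positivity)
    have hsM : Real.sqrt (2 * M) ^ 2 = 2 * M := Real.sq_sqrt (by positivity)
    have hskp : 0 < Real.sqrt (2 * deriv W lam) := Real.sqrt_pos.mpr (by positivity)
    have hsMp : 0 < Real.sqrt (2 * M) := Real.sqrt_pos.mpr (by positivity)
    have hsann : 0 ≤ Real.sqrt (a - lam) := Real.sqrt_nonneg _
    refine ⟨?_, ?_, haled⟩
    · -- from hup
      have h2 : x * Real.sqrt (2 * deriv W lam) ≤ 2 * Real.sqrt (a - lam) := by
        have h3 : (Real.sqrt (2 * deriv W lam))⁻¹ * (2 * Real.sqrt (a - lam))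
            = 2 * Real.sqrt (a - lam) / Real.sqrt (2 * deriv W lam) := by rw [div_eq_inv_mul]
        rw [h3, le_div_iff₀ hskp] at hup
        exact hup
      have h4 := mul_self_le_mul_self (mul_nonneg hx0.le hskp.le) h2
      nlinarith [h4, hsa, hsk]
    · -- from hlo
      have h2 : 2 * Real.sqrt (a - lam) ≤ x * Real.sqrt (2 * M) := by
        have h3 : (Real.sqrt (2 * M))⁻¹ * (2 * Real.sqrt (a - lam))
            = 2 * Real.sqrt (a - lam) / Real.sqrt (2 * M) := by rw [div_eq_inv_mul]
        rw [h3, div_le_iff₀ hsMp] at hlo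
        exact hlo
      have h4 := mul_self_le_mul_self (by positivity) h2
      nlinarith [h4, hsa, hsM]
  -- derivative of alpha at 0
  have hx1pos : 0 < msFfn W lam (lam + 1) := by
    rw [← hFlam]
    exact hFmono (mem_Ici.mpr le_rfl) (by simp only [mem_Ici]; linarith) (by linarith)
  have hM1nn : 0 ≤ deriv W (lam + 1) := (hMpos one_pos).le
  have halfd0 : HasDerivAt (msAlf W lam) (msAlf' W lam 0) 0 := by
    rw [half'0, hasDerivAt_iff_tendsto_slope]
    apply squeeze_zero_norm' (a := fun y : ℝ => deriv W (lam + 1) * |y| / 2)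
    · have hmem : Ioo (-(msFfn W lam (lam+1))) (msFfn W lam (lam+1))
          ∈ nhdsWithin (0:ℝ) {(0:ℝ)}ᶜ :=
        mem_nhdsWithin_of_mem_nhds (isOpen_Ioo.mem_nhds ⟨by linarith, hx1pos⟩)
      filter_upwards [hmem, self_mem_nhdsWithin] with y hy hy0
      have hyne : y ≠ 0 := hy0
      have habs : 0 < |y| := abs_pos.mpr hyne
      have habs2 : |y| ≤ msFfn W lam (lam + 1) := (abs_lt.mpr ⟨hy.1, hy.2⟩).le
      have hb := (hkey one_pos habs habs2).2.1
      have hyl : |y| < msLvl W lam := lt_of_le_of_lt habs2 (hFlt (by linarith))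
      have hge : lam ≤ msAfn W lam |y| := (hA habs.le hyl).1
      have hslope : slope (msAlf W lam) 0 y = (msAfn W lam |y| - lam) / y := by
        rw [slope_def_field, half0, sub_zero, msAlf]
      rw [hslope, Real.norm_eq_abs, abs_div, abs_of_nonneg (by linarith : (0:ℝ) ≤ msAfn W lam |y| - lam)]
      rw [div_le_iff₀ habs]
      have hy2 : |y| ^ 2 = y ^ 2 := sq_abs y
      nlinarith [hb]
    · have h1 : Tendsto (fun y : ℝ => deriv W (lam + 1) * |y| / 2) (nhds 0) (nhds 0) := by
        have h2 : Continuous fun y : ℝ => deriv W (lam + 1) * |y| / 2 :=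
          (continuous_const.mul continuous_abs).div_const 2
        have h3 := h2.tendsto 0
        simpa using h3
      exact h1.mono_left nhdsWithin_le_nhds
  have half'd0 : HasDerivAt (msAlf' W lam) (deriv W lam) 0 := by
    rw [hasDerivAt_iff_tendsto_slope, Metric.tendsto_nhdsWithin_nhds]
    intro ε hε
    have hcont : ContinuousAt (fun δ : ℝ => deriv W (lam + δ)) 0 :=
      (hWdc.comp (continuous_const.add continuous_id)).continuousAt
    have hev : ∀ᶠ δ : ℝ in nhds 0, deriv W (lam + δ) < deriv W lam + ε/2 := by
      have h0 : deriv W (lam + 0) < deriv W lam + ε/2 := by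
        rw [add_zero]; linarith
      exact hcont.eventually_lt_const (by simpa using h0)
    obtain ⟨δ₀, hδ₀pos, hball⟩ := Metric.eventually_nhds_iff.mp hev
    set δ' := δ₀ / 2 with hδ'def
    have hδ'pos : 0 < δ' := by positivity
    have hM : deriv W (lam + δ') < deriv W lam + ε/2 := by
      apply hball
      rw [Real.dist_eq, sub_zero, abs_of_pos hδ'pos]
      linarith
    have hδFpos : 0 < msFfn W lam (lam + δ') := by
      rw [← hFlam]
      exact hFmono (mem_Ici.mpr le_rfl) (by simp only [mem_Ici]; linarith) (by linarith)
    refine ⟨msFfn W lam (lam + δ'), hδFpos, fun y hy hyd => ?_⟩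
    have hyne : y ≠ 0 := hy
    have habs : 0 < |y| := abs_pos.mpr hyne
    rw [Real.dist_eq, sub_zero] at hyd
    have hb := hkey hδ'pos habs hyd.le
    obtain ⟨hb1, hb2, hb3⟩ := hb
    set a := msAfn W lam |y| with hadef
    set k := deriv W lam with hkdef
    set M := deriv W (lam + δ') with hMdef
    have hyl : |y| < msLvl W lam := lt_of_le_of_lt hyd.le (hFlt (by linarith))
    have hge : lam ≤ a := (hA habs.le hyl).1
    have hGlow : 2 * k * (a - lam) ≤ 2 * (W a - W lam) := by nlinarith [htan_low hge]
    have hGupp : 2 * (W a - W lam) ≤ 2 * M * (a - lam) := by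
      nlinarith [htan_upp hδ'pos hge hb3]
    have hsqlow : k * |y| ≤ Real.sqrt (2 * (W a - W lam)) := by
      have h1 : k * |y| = Real.sqrt ((k * |y|)^2) := (Real.sqrt_sq (by positivity)).symm
      rw [h1]
      apply Real.sqrt_le_sqrt
      nlinarith [hb1]
    have hsqupp : Real.sqrt (2 * (W a - W lam)) ≤ M * |y| := by
      have hMp : 0 < M := hMpos hδ'pos
      have h1 : M * |y| = Real.sqrt ((M * |y|)^2) := (Real.sqrt_sq (by positivity)).symm
      rw [h1]
      apply Real.sqrt_le_sqrt
      nlinarith [hb2]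
    have hq : slope (msAlf' W lam) 0 y = Real.sqrt (2 * (W a - W lam)) / |y| := by
      rw [slope_def_field, half'0, sub_zero, sub_zero]
      rcases hyne.lt_or_gt with h | h
      · rw [msAlf', Real.sign_of_neg h]
        have h9 : msAlf W lam y = a := by rw [msAlf, hadef]
        rw [h9, abs_of_neg h, neg_one_mul, neg_div, div_neg]
      · rw [msAlf', Real.sign_of_pos h]
        have h9 : msAlf W lam y = a := by rw [msAlf, hadef]
        rw [h9, abs_of_pos h, one_mul]
    rw [hq, Real.dist_eq]
    have hlo2 : k ≤ Real.sqrt (2 * (W a - W lam)) / |y| := by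
      rw [le_div_iff₀ habs]; linarith
    have hhi2 : Real.sqrt (2 * (W a - W lam)) / |y| ≤ M := by
      rw [div_le_iff₀ habs]; linarith
    rw [abs_of_nonneg (by linarith : (0:ℝ) ≤ Real.sqrt (2 * (W a - W lam)) / |y| - k)]
    have : M < k + ε/2 := hM
    linarith
  -- translation identity for the level
  have hlvl_eq : msLvl W lam
      = ∫ s in Ioi (0:ℝ), 1 / Real.sqrt (2 * (W (s + lam) - W lam)) := by
    have hmp := measurePreserving_add_right (volume : Measure ℝ) lam
    have hme : MeasurableEmbedding (fun x : ℝ => x + lam) :=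
      (MeasurableEquiv.addRight lam).measurableEmbedding
    have h1 := hmp.setIntegral_preimage_emb hme (msHfn W lam) (Ioi lam)
    have h2 : (fun x : ℝ => x + lam) ⁻¹' (Ioi lam) = Ioi 0 := by
      ext x
      simp only [mem_preimage, mem_Ioi]
      constructor <;> intro h <;> linarith
    rw [h2] at h1
    rw [msLvl, ← h1]
    rfl
  -- assemble
  refine ⟨msLvl W lam, msAlf W lam, msAlf' W lam, hlvl_eq, hlvlpos, ?_, half0, half'0,
    fun x _ => heven x, ?_, ?_, ?_⟩
  · intro x hx
    by_cases hne : x = 0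
    · subst hne
      refine ⟨halfd0, ?_⟩
      rw [half0]
      exact half'd0
    · exact ⟨halfd hx hne, half'd hx hne⟩
  · intro x hx y hy hxy
    have hx' : msAlf W lam x = msAfn W lam x := by rw [msAlf, abs_of_nonneg hx.1]
    have hy' : msAlf W lam y = msAfn W lam y := by rw [msAlf, abs_of_nonneg hy.1]
    rw [hx', hy']
    exact hAlt hx.1 hxy hy.2
  · apply Subset.antisymm
    · rintro _ ⟨x, hx, rfl⟩
      rw [msAlf, abs_of_nonneg hx.1]
      exact (hA hx.1 hx.2).1
    · intro a ha
      have ha' : lam ≤ a := ha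
      refine ⟨msFfn W lam a, ⟨hFnonneg ha', hFlt ha'⟩, ?_⟩
      rw [msAlf, abs_of_nonneg (hFnonneg ha'), hAF ha']
  · rw [tendsto_atTop]
    intro b
    have hcge : lam ≤ max b lam := le_max_right _ _
    have hmem : Ioo (msFfn W lam (max b lam)) (msLvl W lam)
        ∈ nhdsWithin (msLvl W lam) (Iio (msLvl W lam)) :=
      Ioo_mem_nhdsLT_of_mem ⟨hFlt hcge, le_rfl⟩
    filter_upwards [hmem] with x hx
    have hx0 : 0 ≤ x := (hFnonneg hcge).trans hx.1.le
    have hax := hA hx0 hx.2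
    have hgt : max b lam < msAfn W lam x := by
      by_contra hcon
      push_neg at hcon
      rcases eq_or_lt_of_le hcon with heq | hlt
      · rw [← hax.2, heq] at hx
        exact lt_irrefl _ hx.1
      · have := hFmono hax.1 (mem_Ici.mpr hcge) hlt
        rw [hax.2] at this
        linarith [hx.1]
    rw [msAlf, abs_of_nonneg hx0]
    linarith [le_max_left b lam]
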